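/- arXiv:1101.1452 — 5 statements merged into one kernel-verified Lean document; each statement's English description precedes it below -/
import Mathlib

section
/- Let T ⊂ R^2 be a nondegenerate triangle and f a convex function on T. Let e be an edge of T with endpoints z₀ and z₁, and let T¹, T² be the two triangles obtained by bisecting T from the midpoint of e to the opposite vertex. Then the decrease in L¹ interpolation error satisfies ‖f − I_T f‖_{L¹(T)} − (‖f − I_{T¹} f‖_{L¹(T¹)} + ‖f − I_{T²} f‖_{L¹(T²)}) = (|T|/3)·( (f(z₀)+f(z₁))/2 − f((z₀+z₁)/2) ). -/
open MeasureTheory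

/-- The 2D cross product / determinant of two vectors of `ℝ × ℝ`. -/
noncomputable def det2 (u v : ℝ × ℝ) : ℝ := u.1 * v.2 - u.2 * v.1

/-- The area of the triangle with vertices `p0, p1, p2`. -/
noncomputable def triArea (p0 p1 p2 : ℝ × ℝ) : ℝ := |det2 (p1 - p0) (p2 - p0)| / 2

/-- The (closed) triangle with vertices `p0, p1, p2`. -/
def tri (p0 p1 p2 : ℝ × ℝ) : Set (ℝ × ℝ) := convexHull ℝ {p0, p1, p2}

open Set

lemma mem_tri_iff {p0 p1 p2 x : ℝ × ℝ} :
    x ∈ tri p0 p1 p2 ↔ ∃ a b c : ℝ, 0 ≤ a ∧ 0 ≤ b ∧ 0 ≤ c ∧ a + b + c = 1 ∧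
      x = a • p0 + b • p1 + c • p2 := by
  constructor
  · intro hx
    rw [tri, convexHull_insert ⟨p1, Set.mem_insert _ _⟩, convexHull_pair,
      mem_convexJoin] at hx
    obtain ⟨u, hu, z, hz, hseg⟩ := hx
    rw [Set.mem_singleton_iff] at hu
    subst hu
    obtain ⟨s, t, hs, ht, hst, rfl⟩ := hz
    obtain ⟨a, d, ha, hd, had, rfl⟩ := hseg
    refine ⟨a, d * s, d * t, ha, mul_nonneg hd hs, mul_nonneg hd ht,
      by linear_combination had + d * hst, ?_⟩
    simp only [smul_add, smul_smul, add_assoc]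
  · rintro ⟨a, b, c, ha, hb, hc, habc, rfl⟩
    have h := Finset.centerMass_mem_convexHull (Finset.univ : Finset (Fin 3))
      (w := ![a, b, c]) (z := ![p0, p1, p2]) (s := ({p0, p1, p2} : Set (ℝ × ℝ)))
      (by intro i _; fin_cases i <;> simpa)
      (by simp [Fin.sum_univ_three, habc])
      (by intro i _; fin_cases i <;> simp [Set.mem_insert_iff])
    have he : (Finset.univ : Finset (Fin 3)).centerMass ![a, b, c] ![p0, p1, p2]
        = a • p0 + b • p1 + c • p2 := by
      simp [Finset.centerMass, Fin.sum_univ_three, habc]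
    rwa [he] at h

lemma det2_affine (q r p0 p1 p2 : ℝ × ℝ) {a b c : ℝ} (h : a + b + c = 1) :
    det2 (q - (a • p0 + b • p1 + c • p2)) (r - (a • p0 + b • p1 + c • p2)) =
      a * det2 (q - p0) (r - p0) + b * det2 (q - p1) (r - p1) + c * det2 (q - p2) (r - p2) := by
  have hc : c = 1 - a - b := by linarith
  subst hc
  simp only [det2, Prod.fst_add, Prod.snd_add, Prod.fst_sub, Prod.snd_sub,
    Prod.smul_fst, Prod.smul_snd, smul_eq_mul]
  ring

lemma det2_left_combo (v w p0 p1 p2 : ℝ × ℝ) {a b c : ℝ} (h : a + b + c = 1) :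
    det2 (a • p0 + b • p1 + c • p2 - w) v =
      a * det2 (p0 - w) v + b * det2 (p1 - w) v + c * det2 (p2 - w) v := by
  have hc : c = 1 - a - b := by linarith
  subst hc
  simp only [det2, Prod.fst_add, Prod.snd_add, Prod.fst_sub, Prod.snd_sub,
    Prod.smul_fst, Prod.smul_snd, smul_eq_mul]
  ring

/-- The affine interpolation of `f` at the vertices `p0, p1, p2`, written with
barycentric coordinates; for affinely independent vertices it is the unique
affine function agreeing with `f` at the three vertices. -/
noncomputable def interp (p0 p1 p2 : ℝ × ℝ) (f : ℝ × ℝ → ℝ) (x : ℝ × ℝ) : ℝ :=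
  (det2 (p1 - x) (p2 - x) * f p0 + det2 (p2 - x) (p0 - x) * f p1 +
    det2 (p0 - x) (p1 - x) * f p2) / det2 (p1 - p0) (p2 - p0)

lemma interp_bary {p0 p1 p2 : ℝ × ℝ} (hD : det2 (p1 - p0) (p2 - p0) ≠ 0)
    (f : ℝ × ℝ → ℝ) {a b c : ℝ} (h : a + b + c = 1) :
    interp p0 p1 p2 f (a • p0 + b • p1 + c • p2) = a * f p0 + b * f p1 + c * f p2 := by
  have e1 : det2 (p1 - (a • p0 + b • p1 + c • p2)) (p2 - (a • p0 + b • p1 + c • p2))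
      = a * det2 (p1 - p0) (p2 - p0) := by
    rw [det2_affine _ _ _ _ _ h]
    simp only [det2, Prod.fst_sub, Prod.snd_sub]
    ring
  have e2 : det2 (p2 - (a • p0 + b • p1 + c • p2)) (p0 - (a • p0 + b • p1 + c • p2))
      = b * det2 (p1 - p0) (p2 - p0) := by
    rw [det2_affine _ _ _ _ _ h]
    simp only [det2, Prod.fst_sub, Prod.snd_sub]
    ring
  have e3 : det2 (p0 - (a • p0 + b • p1 + c • p2)) (p1 - (a • p0 + b • p1 + c • p2))
      = c * det2 (p1 - p0) (p2 - p0) := by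
    rw [det2_affine _ _ _ _ _ h]
    simp only [det2, Prod.fst_sub, Prod.snd_sub]
    ring
  rw [interp, e1, e2, e3]
  field_simp

lemma interp_vertex0 {p0 p1 p2 : ℝ × ℝ} (hD : det2 (p1 - p0) (p2 - p0) ≠ 0)
    (f : ℝ × ℝ → ℝ) : interp p0 p1 p2 f p0 = f p0 := by
  have h := interp_bary hD f (a := 1) (b := 0) (c := 0) (by norm_num)
  simpa using h

lemma interp_vertex1 {p0 p1 p2 : ℝ × ℝ} (hD : det2 (p1 - p0) (p2 - p0) ≠ 0)
    (f : ℝ × ℝ → ℝ) : interp p0 p1 p2 f p1 = f p1 := by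
  have h := interp_bary hD f (a := 0) (b := 1) (c := 0) (by norm_num)
  simpa using h

lemma interp_vertex2 {p0 p1 p2 : ℝ × ℝ} (hD : det2 (p1 - p0) (p2 - p0) ≠ 0)
    (f : ℝ × ℝ → ℝ) : interp p0 p1 p2 f p2 = f p2 := by
  have h := interp_bary hD f (a := 0) (b := 0) (c := 1) (by norm_num)
  simpa using h

lemma f_le_interp {p0 p1 p2 : ℝ × ℝ} (hD : det2 (p1 - p0) (p2 - p0) ≠ 0)
    {f : ℝ × ℝ → ℝ} (hconv : ConvexOn ℝ (tri p0 p1 p2) f) {x : ℝ × ℝ}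
    (hx : x ∈ tri p0 p1 p2) : f x ≤ interp p0 p1 p2 f x := by
  obtain ⟨a, b, c, ha, hb, hc, habc, rfl⟩ := mem_tri_iff.1 hx
  rw [interp_bary hD f habc]
  have h := hconv.map_centerMass_le (t := (Finset.univ : Finset (Fin 3)))
    (w := ![a, b, c]) (p := ![p0, p1, p2])
    (by intro i _; fin_cases i <;> simpa)
    (by simp [Fin.sum_univ_three, habc])
    (by intro i _; fin_cases i <;>
      exact subset_convexHull ℝ _ (by simp [Set.mem_insert_iff]))
  simpa [Finset.centerMass, Fin.sum_univ_three, habc] using h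

lemma interp_affine (p0 p1 p2 : ℝ × ℝ) (f : ℝ × ℝ → ℝ)
    (hD : det2 (p1 - p0) (p2 - p0) ≠ 0) :
    ∃ α β γ : ℝ, ∀ x : ℝ × ℝ, interp p0 p1 p2 f x = α + β * x.1 + γ * x.2 := by
  refine ⟨(det2 p1 p2 * f p0 + det2 p2 p0 * f p1 + det2 p0 p1 * f p2) / det2 (p1 - p0) (p2 - p0),
    ((p1.2 - p2.2) * f p0 + (p2.2 - p0.2) * f p1 + (p0.2 - p1.2) * f p2) / det2 (p1 - p0) (p2 - p0),
    ((p2.1 - p1.1) * f p0 + (p0.1 - p2.1) * f p1 + (p1.1 - p0.1) * f p2) / det2 (p1 - p0) (p2 - p0),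
    ?_⟩
  intro x
  rw [interp]
  field_simp
  simp only [det2, Prod.fst_sub, Prod.snd_sub]
  ring

def stdSimplex2 : Set (ℝ × ℝ) := {p | 0 ≤ p.1 ∧ 0 ≤ p.2 ∧ p.1 + p.2 ≤ 1}

lemma stdSimplex2_eq : stdSimplex2 = tri (0, 0) (1, 0) (0, 1) := by
  ext x
  rw [stdSimplex2, Set.mem_setOf_eq, mem_tri_iff]
  constructor
  · rintro ⟨h1, h2, h3⟩
    refine ⟨1 - x.1 - x.2, x.1, x.2, by linarith, h1, h2, by ring, ?_⟩
    apply Prod.ext <;>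
      simp [Prod.fst_add, Prod.snd_add, Prod.smul_fst, Prod.smul_snd, smul_eq_mul]
  · rintro ⟨a, b, c, ha, hb, hc, habc, rfl⟩
    have h1 : (a • ((0:ℝ),(0:ℝ)) + b • ((1:ℝ),(0:ℝ)) + c • ((0:ℝ),(1:ℝ))).1 = b := by
      simp
    have h2 : (a • ((0:ℝ),(0:ℝ)) + b • ((1:ℝ),(0:ℝ)) + c • ((0:ℝ),(1:ℝ))).2 = c := by
      simp
    rw [h1, h2]
    exact ⟨hb, hc, by linarith⟩

lemma isCompact_tri (p0 p1 p2 : ℝ × ℝ) : IsCompact (tri p0 p1 p2) :=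
  ((Set.finite_singleton p2).insert p1 |>.insert p0).isCompact_convexHull ℝ

lemma measurableSet_tri (p0 p1 p2 : ℝ × ℝ) : MeasurableSet (tri p0 p1 p2) :=
  (isCompact_tri p0 p1 p2).isClosed.measurableSet

open intervalIntegral in
lemma int_affine_Icc (c d b : ℝ) (hb : 0 ≤ b) :
    ∫ y in Set.Icc (0:ℝ) b, (c + d * y) = c * b + d * b ^ 2 / 2 := by
  rw [MeasureTheory.integral_Icc_eq_integral_Ioc, ← integral_of_le hb]
  have h1 : IntervalIntegrable (fun y : ℝ => d * y) volume 0 b :=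
    (continuous_const.mul continuous_id).intervalIntegrable _ _
  have h0 : IntervalIntegrable (fun _ : ℝ => c) volume 0 b := intervalIntegrable_const
  rw [integral_add h0 h1, intervalIntegral.integral_const_mul, integral_id]
  simp
  ring

open intervalIntegral in
lemma int_quad_01 (c0 c1 c2 : ℝ) :
    ∫ x in Set.Icc (0:ℝ) 1, (c0 + c1 * x + c2 * x ^ 2) = c0 + c1 / 2 + c2 / 3 := by
  rw [MeasureTheory.integral_Icc_eq_integral_Ioc,
    ← integral_of_le (by norm_num : (0:ℝ) ≤ 1)]
  have h1 : IntervalIntegrable (fun y : ℝ => c1 * y) volume 0 1 :=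
    (continuous_const.mul continuous_id).intervalIntegrable _ _
  have h2 : IntervalIntegrable (fun y : ℝ => c2 * y ^ 2) volume 0 1 :=
    (continuous_const.mul (continuous_pow 2)).intervalIntegrable _ _
  have h0 : IntervalIntegrable (fun _ : ℝ => c0) volume 0 1 := intervalIntegrable_const
  rw [integral_add (h0.add h1) h2, integral_add h0 h1, intervalIntegral.integral_const_mul,
    intervalIntegral.integral_const_mul, integral_id, integral_pow]
  simp
  ring

lemma measurableSet_stdSimplex2 : MeasurableSet stdSimplex2 := by
  rw [stdSimplex2_eq]; exact measurableSet_tri _ _ _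

lemma integral_stdSimplex2 (α β γ : ℝ) :
    ∫ p in stdSimplex2, (α + β * p.1 + γ * p.2) = α / 2 + β / 6 + γ / 6 := by
  have hmeas := measurableSet_stdSimplex2
  have hcomp : IsCompact stdSimplex2 := by rw [stdSimplex2_eq]; exact isCompact_tri _ _ _
  set F : ℝ × ℝ → ℝ := fun p => α + β * p.1 + γ * p.2 with hF
  have hFc : Continuous F := by
    apply Continuous.add (Continuous.add continuous_const ?_) ?_
    · exact continuous_const.mul continuous_fst
    · exact continuous_const.mul continuous_snd
  have hint : IntegrableOn F stdSimplex2 := hFc.continuousOn.integrableOn_compact hcomp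
  have hind : Integrable (stdSimplex2.indicator F) := (integrable_indicator_iff hmeas).2 hint
  rw [← MeasureTheory.integral_indicator hmeas]
  rw [MeasureTheory.Measure.volume_eq_prod] at hind ⊢
  rw [MeasureTheory.integral_prod _ hind]
  have key : ∀ x : ℝ, (∫ y, stdSimplex2.indicator F (x, y)) =
      (Set.Icc (0:ℝ) 1).indicator
        (fun x => (α + β * x) * (1 - x) + γ * (1 - x) ^ 2 / 2) x := by
    intro x
    by_cases hx : x ∈ Set.Icc (0:ℝ) 1
    · have h1 : ∀ y, stdSimplex2.indicator F (x, y)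
          = (Set.Icc 0 (1 - x)).indicator (fun y => F (x, y)) y := by
        intro y
        by_cases hy : y ∈ Set.Icc (0:ℝ) (1 - x)
        · rw [Set.indicator_of_mem hy,
            Set.indicator_of_mem (show (x, y) ∈ stdSimplex2 from
              ⟨hx.1, hy.1, by have := hy.2; simp only; linarith⟩)]
        · rw [Set.indicator_of_notMem hy, Set.indicator_of_notMem ?_]
          intro hmem
          obtain ⟨hm1, hm2, hm3⟩ := hmem
          exact hy ⟨hm2, by simp only at hm3 ⊢; linarith⟩
      simp_rw [h1]
      rw [MeasureTheory.integral_indicator measurableSet_Icc]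
      rw [Set.indicator_of_mem hx]
      exact int_affine_Icc (α + β * x) γ (1 - x) (by linarith [hx.2])
    · have h0 : ∀ y, stdSimplex2.indicator F (x, y) = 0 := by
        intro y
        apply Set.indicator_of_notMem
        rintro ⟨h1, h2, h3⟩
        simp only at h1 h2 h3
        simp only [Set.mem_Icc, not_and_or, not_le] at hx
        rcases hx with hx | hx <;> linarith
      simp_rw [h0]
      rw [Set.indicator_of_notMem hx]
      simp
  simp_rw [key]
  rw [MeasureTheory.integral_indicator measurableSet_Icc]
  rw [show (fun x : ℝ => (α + β * x) * (1 - x) + γ * (1 - x) ^ 2 / 2)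
      = (fun x : ℝ => (α + γ / 2) + (β - α - γ) * x + (γ / 2 - β) * x ^ 2) from
    funext fun x => by ring]
  rw [int_quad_01]
  ring

noncomputable def triLin (p0 p1 p2 : ℝ × ℝ) : (ℝ × ℝ) →ₗ[ℝ] (ℝ × ℝ) :=
  (LinearMap.fst ℝ ℝ ℝ).smulRight (p1 - p0) + (LinearMap.snd ℝ ℝ ℝ).smulRight (p2 - p0)

lemma triLin_apply (p0 p1 p2 p : ℝ × ℝ) :
    triLin p0 p1 p2 p = p.1 • (p1 - p0) + p.2 • (p2 - p0) := by
  simp [triLin]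

lemma det_triLin (p0 p1 p2 : ℝ × ℝ) :
    LinearMap.det (triLin p0 p1 p2) = det2 (p1 - p0) (p2 - p0) := by
  rw [← LinearMap.det_toMatrix (Module.Basis.finTwoProd ℝ), Matrix.det_fin_two]
  simp [LinearMap.toMatrix_apply, Module.Basis.finTwoProd_zero, Module.Basis.finTwoProd_one,
    Module.Basis.coe_finTwoProd_repr, triLin_apply, det2, Prod.fst_sub, Prod.snd_sub]
  ring

lemma triLin_inj {p0 p1 p2 : ℝ × ℝ} (hD : det2 (p1 - p0) (p2 - p0) ≠ 0) :
    Function.Injective (triLin p0 p1 p2) := by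
  intro p q h
  have h1 : p.1 * (p1 - p0).1 + p.2 * (p2 - p0).1 = q.1 * (p1 - p0).1 + q.2 * (p2 - p0).1 := by
    have := congrArg Prod.fst h
    simpa [triLin_apply, smul_eq_mul] using this
  have h2 : p.1 * (p1 - p0).2 + p.2 * (p2 - p0).2 = q.1 * (p1 - p0).2 + q.2 * (p2 - p0).2 := by
    have := congrArg Prod.snd h
    simpa [triLin_apply, smul_eq_mul] using this
  have e1 : (p.1 - q.1) * det2 (p1 - p0) (p2 - p0) = 0 := by
    simp only [det2]
    linear_combination (p2 - p0).2 * h1 - (p2 - p0).1 * h2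
  have e2 : (p.2 - q.2) * det2 (p1 - p0) (p2 - p0) = 0 := by
    simp only [det2]
    linear_combination (p1 - p0).1 * h2 - (p1 - p0).2 * h1
  have hp1 : p.1 = q.1 := by
    rcases mul_eq_zero.1 e1 with h | h
    · linarith [sub_eq_zero.1 h]
    · exact absurd h hD
  have hp2 : p.2 = q.2 := by
    rcases mul_eq_zero.1 e2 with h | h
    · linarith [sub_eq_zero.1 h]
    · exact absurd h hD
  exact Prod.ext hp1 hp2

noncomputable def triAff (p0 p1 p2 : ℝ × ℝ) : (ℝ × ℝ) →ᵃ[ℝ] (ℝ × ℝ) where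
  toFun := fun p => p0 + triLin p0 p1 p2 p
  linear := triLin p0 p1 p2
  map_vadd' := by
    intro p v
    simp only [vadd_eq_add, map_add]
    abel

lemma triAff_apply (p0 p1 p2 p : ℝ × ℝ) :
    triAff p0 p1 p2 p = p0 + p.1 • (p1 - p0) + p.2 • (p2 - p0) := by
  show p0 + triLin p0 p1 p2 p = _
  rw [triLin_apply]
  abel

lemma image_triAff (p0 p1 p2 : ℝ × ℝ) :
    triAff p0 p1 p2 '' stdSimplex2 = tri p0 p1 p2 := by
  rw [stdSimplex2_eq, tri, tri, AffineMap.image_convexHull]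
  congr 1
  have e0 : triAff p0 p1 p2 (0, 0) = p0 := by
    rw [triAff_apply]; simp
  have e1 : triAff p0 p1 p2 (1, 0) = p1 := by
    rw [triAff_apply]; simp
  have e2 : triAff p0 p1 p2 (0, 1) = p2 := by
    rw [triAff_apply]; simp
  rw [Set.image_insert_eq, Set.image_insert_eq, Set.image_singleton, e0, e1, e2]

lemma integral_affine_tri (p0 p1 p2 : ℝ × ℝ) (hD : det2 (p1 - p0) (p2 - p0) ≠ 0)
    (α β γ : ℝ) :
    ∫ x in tri p0 p1 p2, (α + β * x.1 + γ * x.2) =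
      triArea p0 p1 p2 * (((α + β * p0.1 + γ * p0.2) + (α + β * p1.1 + γ * p1.2)
        + (α + β * p2.1 + γ * p2.2)) / 3) := by
  rw [← image_triAff p0 p1 p2]
  have hderiv : ∀ x ∈ stdSimplex2, HasFDerivWithinAt (triAff p0 p1 p2)
      (LinearMap.toContinuousLinearMap (triLin p0 p1 p2)) stdSimplex2 x := by
    intro x hx
    have h : HasFDerivAt (fun p => p0 + (triLin p0 p1 p2) p)
        (LinearMap.toContinuousLinearMap (triLin p0 p1 p2)) x := by
      have := (LinearMap.toContinuousLinearMap (triLin p0 p1 p2)).hasFDerivAt (x := x)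
      simpa using this.const_add p0
    exact h.hasFDerivWithinAt
  have hinj : Set.InjOn (triAff p0 p1 p2) stdSimplex2 := by
    intro p _ q _ h
    apply triLin_inj hD
    have : p0 + triLin p0 p1 p2 p = p0 + triLin p0 p1 p2 q := h
    exact add_left_cancel this
  rw [integral_image_eq_integral_abs_det_fderiv_smul volume measurableSet_stdSimplex2
    hderiv hinj]
  have hdet : ∀ x : ℝ × ℝ,
      (LinearMap.toContinuousLinearMap (triLin p0 p1 p2)).det = det2 (p1 - p0) (p2 - p0) := by
    intro x
    show LinearMap.det ((LinearMap.toContinuousLinearMap (triLin p0 p1 p2) :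
      (ℝ × ℝ) →L[ℝ] (ℝ × ℝ)) : (ℝ × ℝ) →ₗ[ℝ] (ℝ × ℝ)) = _
    rw [LinearMap.coe_toContinuousLinearMap]
    exact det_triLin p0 p1 p2
  rw [show (∫ x in stdSimplex2, |(LinearMap.toContinuousLinearMap (triLin p0 p1 p2)).det| •
        (α + β * ((triAff p0 p1 p2) x).1 + γ * ((triAff p0 p1 p2) x).2)) =
      ∫ x in stdSimplex2, |det2 (p1 - p0) (p2 - p0)| *
        (α + β * ((triAff p0 p1 p2) x).1 + γ * ((triAff p0 p1 p2) x).2) from by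
    rw [hdet (0,0)]; simp_rw [smul_eq_mul]]
  have hrw : ∀ p : ℝ × ℝ,
      |det2 (p1 - p0) (p2 - p0)| * (α + β * (triAff p0 p1 p2 p).1 + γ * (triAff p0 p1 p2 p).2)
      = |det2 (p1 - p0) (p2 - p0)| *
        ((α + β * p0.1 + γ * p0.2)
          + (β * (p1.1 - p0.1) + γ * (p1.2 - p0.2)) * p.1
          + (β * (p2.1 - p0.1) + γ * (p2.2 - p0.2)) * p.2) := by
    intro p
    rw [triAff_apply]
    simp only [Prod.fst_add, Prod.snd_add, Prod.smul_fst, Prod.smul_snd, smul_eq_mul,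
      Prod.fst_sub, Prod.snd_sub]
    ring
  simp_rw [hrw]
  rw [MeasureTheory.integral_const_mul]
  rw [integral_stdSimplex2]
  rw [triArea]
  ring

lemma integral_interp (p0 p1 p2 : ℝ × ℝ) (hD : det2 (p1 - p0) (p2 - p0) ≠ 0)
    (f : ℝ × ℝ → ℝ) :
    ∫ x in tri p0 p1 p2, interp p0 p1 p2 f x
      = triArea p0 p1 p2 * ((f p0 + f p1 + f p2) / 3) := by
  obtain ⟨α, β, γ, h⟩ := interp_affine p0 p1 p2 f hD
  have : ∫ x in tri p0 p1 p2, interp p0 p1 p2 f x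
      = ∫ x in tri p0 p1 p2, (α + β * x.1 + γ * x.2) := by
    apply MeasureTheory.integral_congr_ae
    filter_upwards with x using h x
  rw [this, integral_affine_tri p0 p1 p2 hD, ← h p0, ← h p1, ← h p2,
    interp_vertex0 hD, interp_vertex1 hD, interp_vertex2 hD]

lemma integrableOn_interp {p0 p1 p2 : ℝ × ℝ} (hD : det2 (p1 - p0) (p2 - p0) ≠ 0)
    (f : ℝ × ℝ → ℝ) (s : Set (ℝ × ℝ)) (hs : IsCompact s) :
    MeasureTheory.IntegrableOn (interp p0 p1 p2 f) s := by
  obtain ⟨α, β, γ, h⟩ := interp_affine p0 p1 p2 f hD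
  have hc : Continuous fun x : ℝ × ℝ => α + β * x.1 + γ * x.2 := by
    apply Continuous.add (Continuous.add continuous_const ?_) ?_
    · exact continuous_const.mul continuous_fst
    · exact continuous_const.mul continuous_snd
  have : ContinuousOn (interp p0 p1 p2 f) s := by
    apply ContinuousOn.congr hc.continuousOn
    intro x _
    exact h x
  exact this.integrableOn_compact hs

lemma det2_ne_zero_of_affineIndependent {z0 z1 z2 : ℝ × ℝ}
    (hT : AffineIndependent ℝ ![z0, z1, z2]) : det2 (z1 - z0) (z2 - z0) ≠ 0 := by
  intro hdet
  rw [affineIndependent_iff] at hT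
  set u := z1 - z0
  set v := z2 - z0
  -- find a nontrivial relation a • u + b • v = 0
  have key : ∃ a b : ℝ, ¬(a = 0 ∧ b = 0) ∧ a • u + b • v = 0 := by
    by_cases hu : u = 0
    · exact ⟨1, 0, by simp, by simp [hu]⟩
    · by_cases hu1 : u.1 ≠ 0
      · refine ⟨v.1, -u.1, by simp [hu1], ?_⟩
        apply Prod.ext
        · simp only [Prod.fst_add, Prod.smul_fst, smul_eq_mul, Prod.fst_zero]
          ring
        · simp only [Prod.snd_add, Prod.smul_snd, smul_eq_mul, Prod.snd_zero]
          simp only [det2] at hdet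
          linarith [hdet]
      · push_neg at hu1
        have hu2 : u.2 ≠ 0 := by
          intro h2
          exact hu (Prod.ext hu1 h2)
        refine ⟨v.2, -u.2, by simp [hu2], ?_⟩
        apply Prod.ext
        · simp only [Prod.fst_add, Prod.smul_fst, smul_eq_mul, Prod.fst_zero]
          simp only [det2] at hdet
          linarith [hdet]
        · simp only [Prod.snd_add, Prod.smul_snd, smul_eq_mul, Prod.snd_zero]
          ring
  obtain ⟨a, b, hab, hrel⟩ := key
  have hsum : ∑ i ∈ (Finset.univ : Finset (Fin 3)), ![-(a+b), a, b] i = 0 := by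
    simp only [Fin.sum_univ_three, Matrix.cons_val_zero, Matrix.cons_val_one,
      Matrix.head_cons, Matrix.cons_val_two, Matrix.tail_cons]
    ring
  have hcomb : ∑ i ∈ (Finset.univ : Finset (Fin 3)),
      ![-(a+b), a, b] i • ![z0, z1, z2] i = 0 := by
    simp only [Fin.sum_univ_three]
    show -(a+b) • z0 + a • z1 + b • z2 = 0
    have : a • u + b • v = a • z1 + b • z2 - (a + b) • z0 := by
      simp only [u, v, smul_sub, add_smul]
      abel
    rw [this] at hrel
    rw [← hrel]
    module
  have := hT Finset.univ ![-(a+b), a, b] hsum hcomb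
  apply hab
  exact ⟨this 1 (Finset.mem_univ _), this 2 (Finset.mem_univ _)⟩

lemma null_line (m v : ℝ × ℝ) (hv : v ≠ 0) :
    MeasureTheory.volume {x : ℝ × ℝ | det2 (x - m) v = 0} = 0 := by
  have hsub : {x : ℝ × ℝ | det2 (x - m) v = 0} ⊆ (affineSpan ℝ {m, m + v} : Set (ℝ × ℝ)) := by
    intro x hx
    simp only [Set.mem_setOf_eq, det2, Prod.fst_sub, Prod.snd_sub] at hx
    have hex : ∃ c : ℝ, x - m = c • v := by
      by_cases hv1 : v.1 ≠ 0
      · refine ⟨(x.1 - m.1) / v.1, Prod.ext ?_ ?_⟩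
        · simp only [Prod.fst_sub, Prod.smul_fst, smul_eq_mul]
          field_simp
        · simp only [Prod.snd_sub, Prod.smul_snd, smul_eq_mul]
          field_simp
          linear_combination -hx
      · push_neg at hv1
        have hv2 : v.2 ≠ 0 := fun h2 => hv (Prod.ext hv1 h2)
        refine ⟨(x.2 - m.2) / v.2, Prod.ext ?_ ?_⟩
        · simp only [Prod.fst_sub, Prod.smul_fst, smul_eq_mul]
          rw [hv1, mul_zero]
          have : (x.1 - m.1) * v.2 = 0 := by rw [← hx]; rw [hv1]; ring
          rcases mul_eq_zero.1 this with h | h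
          · linarith
          · exact absurd h hv2
        · simp only [Prod.snd_sub, Prod.smul_snd, smul_eq_mul]
          field_simp
    obtain ⟨c, hc⟩ := hex
    have hx' : x = c • ((m + v) -ᵥ m) +ᵥ m := by
      rw [vsub_eq_sub, add_sub_cancel_left, vadd_eq_add, ← hc]
      abel
    rw [hx']
    exact AffineSubspace.smul_vsub_vadd_mem _ c
      (mem_affineSpan ℝ (by simp)) (mem_affineSpan ℝ (by simp)) (mem_affineSpan ℝ (by simp))
  refine measure_mono_null hsub ?_
  apply MeasureTheory.Measure.addHaar_affineSubspace
  intro htop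
  have h1 : vectorSpan ℝ ({m, m + v} : Set (ℝ × ℝ)) = ⊤ := by
    rw [← direction_affineSpan, htop, AffineSubspace.direction_top]
  rw [vectorSpan_pair] at h1
  have hne : m -ᵥ (m + v) ≠ 0 := by
    rw [vsub_eq_sub]
    intro h
    apply hv
    have : m - (m + v) = -v := by abel
    rw [this] at h
    simpa using h
  have h2 : Module.finrank ℝ (ℝ ∙ (m -ᵥ (m + v))) = 1 := finrank_span_singleton hne
  rw [h1] at h2
  rw [finrank_top] at h2
  have h3 : Module.finrank ℝ (ℝ × ℝ) = 2 := by
    rw [Module.finrank_prod, Module.finrank_self]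
  omega

/-- The `L¹` interpolation error `‖f − I_T f‖_{L¹(T)}` on the triangle `T` with
vertices `p0, p1, p2`. -/
noncomputable def interpErr (p0 p1 p2 : ℝ × ℝ) (f : ℝ × ℝ → ℝ) : ℝ :=
  ∫ x in tri p0 p1 p2, |f x - interp p0 p1 p2 f x|

lemma interpErr_eq {p0 p1 p2 : ℝ × ℝ} (hD : det2 (p1 - p0) (p2 - p0) ≠ 0)
    {f : ℝ × ℝ → ℝ} (hconv : ConvexOn ℝ (tri p0 p1 p2) f)
    (hcont : ContinuousOn f (tri p0 p1 p2)) :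
    interpErr p0 p1 p2 f = triArea p0 p1 p2 * ((f p0 + f p1 + f p2) / 3)
      - ∫ x in tri p0 p1 p2, f x := by
  rw [interpErr]
  have habs : ∀ x ∈ tri p0 p1 p2, |f x - interp p0 p1 p2 f x|
      = interp p0 p1 p2 f x - f x := by
    intro x hx
    rw [abs_sub_comm]
    exact abs_of_nonneg (sub_nonneg.2 (f_le_interp hD hconv hx))
  rw [MeasureTheory.setIntegral_congr_fun (measurableSet_tri p0 p1 p2) habs]
  rw [MeasureTheory.integral_sub
    (integrableOn_interp hD f _ (isCompact_tri p0 p1 p2))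
    (hcont.integrableOn_compact (isCompact_tri p0 p1 p2))]
  rw [integral_interp p0 p1 p2 hD f]

/-- The decrease `D_T(e,f)` of the `L¹` interpolation error when the triangle
with vertices `z0, z1, z2` is bisected from the midpoint of the edge `e = [z0,z1]`
to the opposite vertex `z2`. -/
noncomputable def Ddec (z0 z1 z2 : ℝ × ℝ) (f : ℝ × ℝ → ℝ) : ℝ :=
  interpErr z0 z1 z2 f - interpErr z0 (midpoint ℝ z0 z1) z2 f -
    interpErr (midpoint ℝ z0 z1) z1 z2 f

/-- for a convex function `f` on a nondegenerate triangle `T` with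
vertices `z0, z1, z2`, bisecting the edge `[z0,z1]` at its midpoint decreases the
`L¹` interpolation error by `(|T|/3)·((f(z0)+f(z1))/2 − f((z0+z1)/2))`. -/
theorem stmt4 (z0 z1 z2 : ℝ × ℝ) (hT : AffineIndependent ℝ ![z0, z1, z2])
    (f : ℝ × ℝ → ℝ) (hconv : ConvexOn ℝ (tri z0 z1 z2) f)
    (hcont : ContinuousOn f (tri z0 z1 z2)) :
    Ddec z0 z1 z2 f =
      triArea z0 z1 z2 / 3 * ((f z0 + f z1) / 2 - f (midpoint ℝ z0 z1)) := by
  set m := midpoint ℝ z0 z1 with hmdef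
  have hm : m = (2⁻¹ : ℝ) • z0 + (2⁻¹ : ℝ) • z1 := by
    rw [hmdef, midpoint_eq_smul_add, smul_add, invOf_eq_inv]
  have hD : det2 (z1 - z0) (z2 - z0) ≠ 0 := det2_ne_zero_of_affineIndependent hT
  have hD1 : det2 (m - z0) (z2 - z0) = det2 (z1 - z0) (z2 - z0) / 2 := by
    rw [hm]
    simp only [det2, Prod.fst_sub, Prod.snd_sub, Prod.fst_add, Prod.snd_add,
      Prod.smul_fst, Prod.smul_snd, smul_eq_mul]
    ring
  have hD2 : det2 (z1 - m) (z2 - m) = det2 (z1 - z0) (z2 - z0) / 2 := by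
    rw [hm]
    simp only [det2, Prod.fst_sub, Prod.snd_sub, Prod.fst_add, Prod.snd_add,
      Prod.smul_fst, Prod.smul_snd, smul_eq_mul]
    ring
  have hK : det2 (z0 - m) (z2 - m) = -(det2 (z1 - z0) (z2 - z0) / 2) := by
    rw [hm]
    simp only [det2, Prod.fst_sub, Prod.snd_sub, Prod.fst_add, Prod.snd_add,
      Prod.smul_fst, Prod.smul_snd, smul_eq_mul]
    ring
  have hDm1 : det2 (m - z0) (z2 - z0) ≠ 0 := by rw [hD1]; exact div_ne_zero hD two_ne_zero
  have hDm2 : det2 (z1 - m) (z2 - m) ≠ 0 := by rw [hD2]; exact div_ne_zero hD two_ne_zero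
  -- membership of vertices
  have hmem_m : m ∈ tri z0 z1 z2 := by
    rw [mem_tri_iff]
    exact ⟨2⁻¹, 2⁻¹, 0, by norm_num, by norm_num, le_refl 0, by norm_num,
      by rw [hm]; module⟩
  have hmem_z0 : z0 ∈ tri z0 z1 z2 := subset_convexHull ℝ _ (by simp)
  have hmem_z1 : z1 ∈ tri z0 z1 z2 := subset_convexHull ℝ _ (by simp)
  have hmem_z2 : z2 ∈ tri z0 z1 z2 := subset_convexHull ℝ _ (by simp)
  have hsub1 : tri z0 m z2 ⊆ tri z0 z1 z2 := by
    apply convexHull_min _ (convex_convexHull ℝ _)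
    intro p hp
    simp only [Set.mem_insert_iff, Set.mem_singleton_iff] at hp
    rcases hp with rfl | rfl | rfl
    · exact hmem_z0
    · exact hmem_m
    · exact hmem_z2
  have hsub2 : tri m z1 z2 ⊆ tri z0 z1 z2 := by
    apply convexHull_min _ (convex_convexHull ℝ _)
    intro p hp
    simp only [Set.mem_insert_iff, Set.mem_singleton_iff] at hp
    rcases hp with rfl | rfl | rfl
    · exact hmem_m
    · exact hmem_z1
    · exact hmem_z2
  -- union decomposition
  have hUnion : tri z0 z1 z2 = tri z0 m z2 ∪ tri m z1 z2 := by
    apply Set.Subset.antisymm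
    · intro x hx
      obtain ⟨a, b, c, ha, hb, hc, habc, rfl⟩ := mem_tri_iff.1 hx
      by_cases hab : b ≤ a
      · left
        rw [mem_tri_iff]
        refine ⟨a - b, 2 * b, c, by linarith, by linarith, hc, by linarith, ?_⟩
        rw [hm]
        module
      · right
        rw [mem_tri_iff]
        refine ⟨2 * a, b - a, c, by linarith, by linarith, hc, by linarith, ?_⟩
        rw [hm]
        module
    · exact Set.union_subset hsub1 hsub2
  -- null intersection
  have hvne : z2 - m ≠ 0 := by
    intro h
    apply hDm2
    rw [h]
    simp [det2]
  have hInterNull : MeasureTheory.volume (tri z0 m z2 ∩ tri m z1 z2) = 0 := by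
    refine measure_mono_null ?_ (null_line m (z2 - m) hvne)
    rintro x ⟨hx1, hx2⟩
    obtain ⟨a, b, c, ha, hb, hc, habc, hxe⟩ := mem_tri_iff.1 hx1
    obtain ⟨a', b', c', ha', hb', hc', habc', hxe'⟩ := mem_tri_iff.1 hx2
    have hval1 : det2 (x - m) (z2 - m) = a * det2 (z0 - m) (z2 - m) := by
      rw [hxe, det2_left_combo _ _ _ _ _ habc]
      have e1 : det2 (m - m) (z2 - m) = 0 := by simp [det2]
      have e2 : det2 (z2 - m) (z2 - m) = 0 := by simp [det2]; ring
      rw [e1, e2]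
      ring
    have hval2 : det2 (x - m) (z2 - m) = b' * det2 (z1 - m) (z2 - m) := by
      rw [hxe', det2_left_combo _ _ _ _ _ habc']
      have e1 : det2 (m - m) (z2 - m) = 0 := by simp [det2]
      have e2 : det2 (z2 - m) (z2 - m) = 0 := by simp [det2]; ring
      rw [e1, e2]
      ring
    have ha0 : a = 0 := by
      rw [hval2, hD2] at hval1
      rw [hK] at hval1
      have hD2' : det2 (z1 - z0) (z2 - z0) / 2 ≠ 0 := div_ne_zero hD two_ne_zero
      have : (b' + a) * (det2 (z1 - z0) (z2 - z0) / 2) = 0 := by linarith [hval1]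
      have hba : b' + a = 0 := by
        rcases mul_eq_zero.1 this with h | h
        · exact h
        · exact absurd h hD2'
      linarith
    show det2 (x - m) (z2 - m) = 0
    rw [hval1, ha0, zero_mul]
  -- convexity and continuity on subtriangles
  have hconv1 : ConvexOn ℝ (tri z0 m z2) f := hconv.subset hsub1 (convex_convexHull ℝ _)
  have hconv2 : ConvexOn ℝ (tri m z1 z2) f := hconv.subset hsub2 (convex_convexHull ℝ _)
  have hcont1 : ContinuousOn f (tri z0 m z2) := hcont.mono hsub1
  have hcont2 : ContinuousOn f (tri m z1 z2) := hcont.mono hsub2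
  -- splitting of the integral of f
  have hint1 : MeasureTheory.IntegrableOn f (tri z0 m z2) :=
    hcont1.integrableOn_compact (isCompact_tri _ _ _)
  have hint2 : MeasureTheory.IntegrableOn f (tri m z1 z2) :=
    hcont2.integrableOn_compact (isCompact_tri _ _ _)
  have hsplit : ∫ x in tri z0 z1 z2, f x
      = (∫ x in tri z0 m z2, f x) + ∫ x in tri m z1 z2, f x := by
    rw [hUnion]
    exact MeasureTheory.integral_union_ae hInterNull
      (measurableSet_tri _ _ _).nullMeasurableSet hint1 hint2
  -- areas
  have hA1 : triArea z0 m z2 = triArea z0 z1 z2 / 2 := by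
    rw [triArea, triArea, hD1, abs_div, abs_two]
  have hA2 : triArea m z1 z2 = triArea z0 z1 z2 / 2 := by
    rw [triArea, triArea, hD2, abs_div, abs_two]
  -- put everything together
  rw [Ddec, ← hmdef]
  rw [interpErr_eq hD hconv hcont, interpErr_eq hDm1 hconv1 hcont1,
    interpErr_eq hDm2 hconv2 hcont2, hsplit, hA1, hA2]
  ring
end

section
/- Let q be a positive definite quadratic form on R^2 and T a triangle with edge vectors a, b, c satisfying a+b+c=0 and q(a) ≥ q(b) ≥ q(c). Define σ_q(T) := (q(b)+q(c))/(4·|T|·√(det q)). If T₁, T₂ are the two children obtained by bisecting the longest edge a at its midpoint, then max{σ_q(T₁), σ_q(T₂)} ≤ σ_q(T). -/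
open Matrix

/-- for a positive definite quadratic form `q(v) = ⟨Qv,v⟩` and a
triangle with edge vectors `a+b+c=0`, `q(a) ≥ q(b) ≥ q(c)`, bisecting the
longest edge `a` at its midpoint produces two children (with edge vectors
`{a/2, b, (c−b)/2}` and `{a/2, (b−c)/2, c}` and area `|T|/2`) whose
non-degeneracy measure `σ_q` does not exceed `σ_q(T)`.  Here `σ_q` of a
triangle of area `A` with edges `e1,e2,e3` is the sum of the two smallest of
`q(e1),q(e2),q(e3)` divided by `4A√(det Q)`. -/
theorem stmt7 (Q : Matrix (Fin 2) (Fin 2) ℝ) (hQ : Q.PosDef)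
    (a b c : Fin 2 → ℝ) (hsum : a + b + c = 0)
    (area : ℝ) (harea : 0 < area)
    (qv : (Fin 2 → ℝ) → ℝ) (hqv : qv = fun v => Q.mulVec v ⬝ᵥ v)
    (hab : qv b ≤ qv a) (hbc : qv c ≤ qv b)
    (sig : ℝ → (Fin 2 → ℝ) → (Fin 2 → ℝ) → (Fin 2 → ℝ) → ℝ)
    (hsig : sig = fun A e1 e2 e3 =>
      (qv e1 + qv e2 + qv e3 - max (max (qv e1) (qv e2)) (qv e3)) /
        (4 * A * Real.sqrt Q.det)) :
    max (sig (area / 2) ((1 / 2 : ℝ) • a) b ((1 / 2 : ℝ) • (c - b)))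
        (sig (area / 2) ((1 / 2 : ℝ) • a) ((1 / 2 : ℝ) • (b - c)) c) ≤
      sig area a b c := by
  have qsmul : ∀ (r : ℝ) (x : Fin 2 → ℝ), qv (r • x) = r^2 * qv x := by
    intro r x
    simp [hqv, Matrix.mulVec_smul, dotProduct_smul, smul_dotProduct, smul_eq_mul]
    simp only [vecHead, vecTail, Pi.smul_apply, smul_eq_mul, Function.comp_apply]
    ring
  have qpar : ∀ x y : Fin 2 → ℝ, qv (x + y) + qv (x - y) = 2 * qv x + 2 * qv y := by
    intro x y
    simp [hqv, Matrix.mulVec_add, Matrix.mulVec_sub, dotProduct_add, dotProduct_sub,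
      add_dotProduct, sub_dotProduct]
    ring
  have qneg : ∀ x : Fin 2 → ℝ, qv (-x) = qv x := by
    intro x
    have := qsmul (-1) x
    simpa using this
  have ha : qv a = qv (b + c) := by
    have : a = -(b + c) := by
      have := hsum
      funext i
      have := congrFun hsum i
      simp at this ⊢
      linarith
    rw [this, qneg]
  have h1 : qv ((1 / 2 : ℝ) • a) = qv a / 4 := by rw [qsmul]; ring
  have h2 : qv ((1 / 2 : ℝ) • (c - b)) = (qv b + qv c) / 2 - qv a / 4 := by
    rw [qsmul, ha]
    have := qpar b c
    have h' : qv (c - b) = qv (b - c) := by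
      have : c - b = -(b - c) := by ring
      rw [this, qneg]
    rw [h']
    linarith
  have h3 : qv ((1 / 2 : ℝ) • (b - c)) = (qv b + qv c) / 2 - qv a / 4 := by
    rw [qsmul, ha]
    have := qpar b c
    linarith
  have hdet : 0 < Q.det := hQ.det_pos
  have hs : 0 < Real.sqrt Q.det := Real.sqrt_pos.mpr hdet
  set s := Real.sqrt Q.det
  have hmaxa : max (max (qv a) (qv b)) (qv c) = qv a := by
    rw [max_eq_left hab, max_eq_left (le_trans hbc hab)]
  subst hsig
  simp only
  rw [h1, h2, h3, hmaxa]
  set qa := qv a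
  set qb := qv b
  set qc := qv c
  have hden : (0:ℝ) < 4 * area * s := by positivity
  have hden2 : (0:ℝ) < 4 * (area / 2) * s := by positivity
  apply max_le
  · rw [div_le_div_iff₀ hden2 hden]
    have hM : qb ≤ max (max (qa / 4) qb) ((qb + qc) / 2 - qa / 4) :=
      le_max_of_le_left (le_max_right _ _)
    nlinarith [mul_pos harea hs]
  · rw [div_le_div_iff₀ hden2 hden]
    have hM : qc ≤ max (max (qa / 4) ((qb + qc) / 2 - qa / 4)) qc := le_max_right _ _
    nlinarith [mul_pos harea hs]
end

section
/- Let q be a positive definite quadratic form on R^2 and T a triangle with edges ordered so that q(a) ≥ q(b) ≥ q(c), where a+b+c=0. Let ψ_q(T) denote the child of the longest-edge (in q-metric) bisection of T which contains the shortest edge c. Then σ_q(ψ_q(T)) ≤ (5/8)·ρ_q(T). -/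
open Matrix

/-- for a positive definite quadratic form `q(v) = ⟨Qv,v⟩` and a
triangle `T` with edges `a+b+c=0`, `q(a) ≥ q(b) ≥ q(c)`, the child
`ψ_q(T)` of the `q`-longest edge bisection containing the shortest edge `c`
(with edges `c, a/2, (b−c)/2` and area `|T|/2`) satisfies
`σ_q(ψ_q(T)) ≤ (5/8)·ρ_q(T)`. -/
theorem stmt9 (Q : Matrix (Fin 2) (Fin 2) ℝ) (hQ : Q.PosDef)
    (a b c : Fin 2 → ℝ) (hsum : a + b + c = 0)
    (area : ℝ) (harea : 0 < area)
    (qv : (Fin 2 → ℝ) → ℝ) (hqv : qv = fun v => Q.mulVec v ⬝ᵥ v)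
    (hab : qv b ≤ qv a) (hbc : qv c ≤ qv b)
    (sig : ℝ → (Fin 2 → ℝ) → (Fin 2 → ℝ) → (Fin 2 → ℝ) → ℝ)
    (hsig : sig = fun A e1 e2 e3 =>
      (qv e1 + qv e2 + qv e3 - max (max (qv e1) (qv e2)) (qv e3)) /
        (4 * A * Real.sqrt Q.det))
    (ρ : ℝ) (hρ : ρ = max (max (qv a) (qv b)) (qv c) / (area * Real.sqrt Q.det)) :
    sig (area / 2) c ((1 / 2 : ℝ) • a) ((1 / 2 : ℝ) • (b - c)) ≤ 5 / 8 * ρ := by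
  subst hsig hρ
  have hs : 0 < Real.sqrt Q.det := Real.sqrt_pos.2 hQ.det_pos
  have hmax : max (max (qv a) (qv b)) (qv c) = qv a := by
    rw [max_eq_left hab, max_eq_left (hbc.trans hab)]
  have hhalf : qv ((1 / 2 : ℝ) • a) = qv a / 4 := by
    subst hqv
    simp only [Matrix.mulVec_smul, smul_dotProduct, dotProduct_smul, smul_eq_mul]
    ring
  simp only [hmax, hhalf]
  rw [div_le_iff₀ (by positivity)]
  have hR : 5 / 8 * (qv a / (area * Real.sqrt Q.det)) * (4 * (area / 2) * Real.sqrt Q.det)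
      = 5 / 4 * qv a := by field_simp; ring
  rw [hR]
  have h3 : qv ((1 / 2 : ℝ) • (b - c)) ≤
      max (max (qv c) (qv a / 4)) (qv ((1 / 2 : ℝ) • (b - c))) := le_max_right _ _
  have hca : qv c ≤ qv a := hbc.trans hab
  linarith
end

section
/- Let q(x,y) = x² + y² be the Euclidean quadratic form and T a triangle with edges |a| ≥ |b| ≥ |c| (a+b+c=0). Let ψ(T) be the child of the midpoint bisection of the longest edge a containing the shortest edge c. Then ρ(ψ(T)) ≤ (ρ(T)/2)·(1 + 16/ρ(T)²), where ρ(S) := (diam S)²/|S|. -/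
set_option maxHeartbeats 1000000


/-- Euclidean case `q(x,y) = x²+y²`.  For a triangle with edge
vectors `a+b+c = 0`, `‖a‖ ≥ ‖b‖ ≥ ‖c‖` and area `|a₀b₁ − a₁b₀|/2 > 0`, the
child `ψ(T)` of the longest-edge midpoint bisection containing the shortest
edge `c` (edges `a/2, c, (b−c)/2`, area `|T|/2`) satisfies
`ρ(ψ(T)) ≤ (ρ(T)/2)·(1 + 16/ρ(T)²)` where `ρ(S) = (diam S)²/|S|`. -/
theorem stmt10 (a b c : EuclideanSpace ℝ (Fin 2)) (hsum : a + b + c = 0)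
    (hab : ‖b‖ ≤ ‖a‖) (hbc : ‖c‖ ≤ ‖b‖)
    (area : ℝ) (harea : area = |a 0 * b 1 - a 1 * b 0| / 2) (hpos : 0 < area) :
    max (max ‖(1 / 2 : ℝ) • a‖ ‖c‖) ‖(1 / 2 : ℝ) • (b - c)‖ ^ 2 / (area / 2) ≤
      ‖a‖ ^ 2 / area / 2 * (1 + 16 / (‖a‖ ^ 2 / area) ^ 2) := by
  have nsq : ∀ x : EuclideanSpace ℝ (Fin 2), ‖x‖ ^ 2 = x 0 ^ 2 + x 1 ^ 2 := by
    intro x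
    rw [EuclideanSpace.norm_eq, Real.sq_sqrt (by positivity)]
    simp [Fin.sum_univ_two, Real.norm_eq_abs, sq_abs]
  have hb : b = -a - c := by
    calc b = (a + b + c) - a - c := by abel
    _ = -a - c := by rw [hsum]; abel
  have hb0 : b 0 = -a 0 - c 0 := by rw [hb]; rfl
  have hb1 : b 1 = -a 1 - c 1 := by rw [hb]; rfl
  set a0 := a 0 with ha0; set a1 := a 1 with ha1; set c0 := c 0 with hc0; set c1 := c 1 with hc1
  set A := a0 ^ 2 + a1 ^ 2 with hA
  have hna : ‖a‖ ^ 2 = A := nsq a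
  have hnc : ‖c‖ ^ 2 = c0 ^ 2 + c1 ^ 2 := nsq c
  have hnbsq : ‖b‖ ^ 2 = (-a0 - c0) ^ 2 + (-a1 - c1) ^ 2 := by
    rw [nsq b, hb0, hb1]
  set cr := a0 * c1 - a1 * c0 with hcr
  have hE : 4 * area ^ 2 = cr ^ 2 := by
    have h : a 0 * b 1 - a 1 * b 0 = -cr := by rw [hb0, hb1]; ring
    rw [harea, h, div_pow, abs_neg, sq_abs]; ring
  clear_value a0 a1 c0 c1 A cr
  have hApos : 0 < A := by
    have lag : cr ^ 2 + (a0 * c0 + a1 * c1) ^ 2 = A * (c0 ^ 2 + c1 ^ 2) := by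
      rw [hA, hcr]; ring
    nlinarith [sq_nonneg (a0 * c0 + a1 * c1), sq_nonneg c0, sq_nonneg c1, hE, hpos,
      mul_pos hpos hpos]
  -- squared comparisons
  have hab2 : ‖b‖ ^ 2 ≤ ‖a‖ ^ 2 := by
    have := norm_nonneg b; nlinarith
  have hbc2 : ‖c‖ ^ 2 ≤ ‖b‖ ^ 2 := by
    have := norm_nonneg c; nlinarith
  have hBle : (-a0 - c0) ^ 2 + (-a1 - c1) ^ 2 ≤ A := by rw [← hnbsq, ← hna]; exact hab2
  have hCle : c0 ^ 2 + c1 ^ 2 ≤ (-a0 - c0) ^ 2 + (-a1 - c1) ^ 2 := by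
    rw [← hnc, ← hnbsq]; exact hbc2
  have h1 : a0 * c0 + a1 * c1 ≤ 0 := by nlinarith [sq_nonneg c0, sq_nonneg c1]
  have h2 : -(A / 2) ≤ a0 * c0 + a1 * c1 := by nlinarith
  set K := A / 4 + 4 * area ^ 2 / A with hK
  -- bound each squared edge by K
  have bd1 : ‖(1 / 2 : ℝ) • a‖ ^ 2 ≤ K := by
    rw [norm_smul]
    have : ‖(1 / 2 : ℝ)‖ = 1 / 2 := by simp [Real.norm_eq_abs]
    rw [this, mul_pow, hna, hK]
    have : 0 ≤ 4 * area ^ 2 / A := by positivity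
    nlinarith
  have bd2 : ‖c‖ ^ 2 ≤ K := by
    have lagrange : (‖c‖ ^ 2) * A = (a0 * c0 + a1 * c1) ^ 2 + cr ^ 2 := by
      rw [hnc, hcr, hA]; ring
    have hdotsq : (a0 * c0 + a1 * c1) ^ 2 ≤ A ^ 2 / 4 := by
      have h3 : 0 ≤ -(a0 * c0 + a1 * c1) := by linarith
      have h4 : -(a0 * c0 + a1 * c1) ≤ A / 2 := by linarith
      have h5 := pow_le_pow_left₀ h3 h4 2
      have h6 : (-(a0 * c0 + a1 * c1)) ^ 2 = (a0 * c0 + a1 * c1) ^ 2 := by ring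
      have h7 : (A / 2) ^ 2 = A ^ 2 / 4 := by ring
      linarith
    rw [hK, show A / 4 + 4 * area ^ 2 / A = (A ^ 2 / 4 + 4 * area ^ 2) / A by
      field_simp, le_div_iff₀ hApos]
    linarith
  have bd3 : ‖(1 / 2 : ℝ) • (b - c)‖ ^ 2 ≤ K := by
    have hd0 : ((1 / 2 : ℝ) • (b - c)) 0 = (-a0 - 2 * c0) / 2 := by
      show (1 / 2 : ℝ) * (b 0 - c 0) = _
      rw [hb0, ← hc0]; ring
    have hd1 : ((1 / 2 : ℝ) • (b - c)) 1 = (-a1 - 2 * c1) / 2 := by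
      show (1 / 2 : ℝ) * (b 1 - c 1) = _
      rw [hb1, ← hc1]; ring
    have hnd : ‖(1 / 2 : ℝ) • (b - c)‖ ^ 2 = ((-a0 - 2 * c0) / 2) ^ 2 + ((-a1 - 2 * c1) / 2) ^ 2 := by
      rw [nsq, hd0, hd1]
    have lagrange : (‖(1 / 2 : ℝ) • (b - c)‖ ^ 2) * A
        = (-(A + 2 * (a0 * c0 + a1 * c1)) / 2) ^ 2 + cr ^ 2 := by
      rw [hnd, hA, hcr]; ring
    have hddsq : (-(A + 2 * (a0 * c0 + a1 * c1)) / 2) ^ 2 ≤ A ^ 2 / 4 := by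
      have h3 : 0 ≤ A + 2 * (a0 * c0 + a1 * c1) := by linarith
      have h4 : A + 2 * (a0 * c0 + a1 * c1) ≤ A := by linarith
      have h5 := pow_le_pow_left₀ h3 h4 2
      have h6 : (-(A + 2 * (a0 * c0 + a1 * c1)) / 2) ^ 2
          = (A + 2 * (a0 * c0 + a1 * c1)) ^ 2 / 4 := by ring
      linarith [sq_nonneg A]
    rw [hK, show A / 4 + 4 * area ^ 2 / A = (A ^ 2 / 4 + 4 * area ^ 2) / A by
      field_simp, le_div_iff₀ hApos]
    linarith
  -- combine
  have hmax : max (max ‖(1 / 2 : ℝ) • a‖ ‖c‖) ‖(1 / 2 : ℝ) • (b - c)‖ ^ 2 ≤ K := by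
    rcases max_cases (max ‖(1 / 2 : ℝ) • a‖ ‖c‖) ‖(1 / 2 : ℝ) • (b - c)‖ with ⟨h, _⟩ | ⟨h, _⟩
    · rw [h]
      rcases max_cases ‖(1 / 2 : ℝ) • a‖ ‖c‖ with ⟨h', _⟩ | ⟨h', _⟩ <;> rw [h'] <;> assumption
    · rw [h]; exact bd3
  rw [hna]
  set M := max (max ‖(1 / 2 : ℝ) • a‖ ‖c‖) ‖(1 / 2 : ℝ) • (b - c)‖ ^ 2
  have hKA : K * A = A ^ 2 / 4 + 4 * area ^ 2 := by
    rw [hK]; field_simp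
  rw [div_le_iff₀ (by positivity : (0:ℝ) < area / 2)]
  have hrhs : A / area / 2 * (1 + 16 / (A / area) ^ 2) * (area / 2) = A / 4 + 4 * area ^ 2 / A := by
    field_simp
    ring
  rw [hrhs]
  exact hmax
end

section
/- Let T be a triangle with edges |a| ≥ |b| ≥ |c| in the Euclidean norm and a+b+c=0, and let ψ(T) be the child of the longest-edge bisection containing c. If ρ(T) ≥ ρ(ψ(T)) and ρ(ψ(T)) ≥ 4, then ρ(T) ≥ ρ(ψ(T)) + √(ρ(ψ(T))² − 16), where ρ(S) := (diam S)²/|S|. -/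
set_option maxHeartbeats 1000000

private lemma nsq2 (x : EuclideanSpace ℝ (Fin 2)) : ‖x‖ ^ 2 = x 0 ^ 2 + x 1 ^ 2 := by
  rw [EuclideanSpace.norm_eq, Real.sq_sqrt (by positivity)]
  simp [Fin.sum_univ_two, sq_abs]

private lemma lemC (a0 a1 b0 b1 : ℝ)
    (h1 : b0 ^ 2 + b1 ^ 2 ≤ a0 ^ 2 + a1 ^ 2)
    (h2 : (-a0 - b0) ^ 2 + (-a1 - b1) ^ 2 ≤ b0 ^ 2 + b1 ^ 2) :
    (a0 ^ 2 + a1 ^ 2) * ((-a0 - b0) ^ 2 + (-a1 - b1) ^ 2)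
      ≤ (a0 ^ 2 + a1 ^ 2) ^ 2 / 4 + (a0 * b1 - a1 * b0) ^ 2 := by
  have hC : (0:ℝ) ≤ (-a0 - b0) ^ 2 + (-a1 - b1) ^ 2 := by positivity
  have hA : (0:ℝ) ≤ a0 ^ 2 + a1 ^ 2 := by positivity
  have ht1 : -(a0 ^ 2 + a1 ^ 2) - (a0 * b0 + a1 * b1) ≤ (a0 ^ 2 + a1 ^ 2) / 2 := by
    nlinarith [hC, h1]
  have ht2 : -((a0 ^ 2 + a1 ^ 2) / 2)
      ≤ -(a0 ^ 2 + a1 ^ 2) - (a0 * b0 + a1 * b1) := by nlinarith [h2]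
  have hsq : (-(a0 ^ 2 + a1 ^ 2) - (a0 * b0 + a1 * b1)) ^ 2
      ≤ ((a0 ^ 2 + a1 ^ 2) / 2) ^ 2 := sq_le_sq' ht2 ht1
  have hid : (a0 ^ 2 + a1 ^ 2) * ((-a0 - b0) ^ 2 + (-a1 - b1) ^ 2)
      = (-(a0 ^ 2 + a1 ^ 2) - (a0 * b0 + a1 * b1)) ^ 2 + (a0 * b1 - a1 * b0) ^ 2 := by
    ring
  have : ((a0 ^ 2 + a1 ^ 2) / 2) ^ 2 = (a0 ^ 2 + a1 ^ 2) ^ 2 / 4 := by ring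
  linarith

private lemma lemD (a0 a1 b0 b1 : ℝ)
    (h1 : b0 ^ 2 + b1 ^ 2 ≤ a0 ^ 2 + a1 ^ 2)
    (h2 : (-a0 - b0) ^ 2 + (-a1 - b1) ^ 2 ≤ b0 ^ 2 + b1 ^ 2) :
    (a0 ^ 2 + a1 ^ 2) * (((a0 + 2 * b0) / 2) ^ 2 + ((a1 + 2 * b1) / 2) ^ 2)
      ≤ (a0 ^ 2 + a1 ^ 2) ^ 2 / 4 + (a0 * b1 - a1 * b0) ^ 2 := by
  have hA : (0:ℝ) ≤ a0 ^ 2 + a1 ^ 2 := by positivity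
  have hid2 : (a0 ^ 2 + a1 ^ 2) * (b0 ^ 2 + b1 ^ 2)
      = (a0 * b0 + a1 * b1) ^ 2 + (a0 * b1 - a1 * b0) ^ 2 := by ring
  have h3 : (a0 * b0 + a1 * b1) ^ 2 ≤ (a0 ^ 2 + a1 ^ 2) * (b0 ^ 2 + b1 ^ 2) := by
    nlinarith [sq_nonneg (a0 * b1 - a1 * b0)]
  have h4 : (a0 ^ 2 + a1 ^ 2) * (b0 ^ 2 + b1 ^ 2) ≤ (a0 ^ 2 + a1 ^ 2) ^ 2 := by
    have := mul_le_mul_of_nonneg_left h1 hA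
    nlinarith [this]
  have h5 : (a0 * b0 + a1 * b1) ^ 2 ≤ (a0 ^ 2 + a1 ^ 2) ^ 2 := le_trans h3 h4
  have hlo : -(a0 ^ 2 + a1 ^ 2) ≤ a0 * b0 + a1 * b1 := by
    nlinarith [sq_nonneg (a0 * b0 + a1 * b1 + (a0 ^ 2 + a1 ^ 2))]
  have ht1 : (a0 ^ 2 + a1 ^ 2) / 2 + (a0 * b0 + a1 * b1) ≤ (a0 ^ 2 + a1 ^ 2) / 2 := by
    nlinarith [h2]
  have ht2 : -((a0 ^ 2 + a1 ^ 2) / 2)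
      ≤ (a0 ^ 2 + a1 ^ 2) / 2 + (a0 * b0 + a1 * b1) := by linarith
  have hsq : ((a0 ^ 2 + a1 ^ 2) / 2 + (a0 * b0 + a1 * b1)) ^ 2
      ≤ ((a0 ^ 2 + a1 ^ 2) / 2) ^ 2 := sq_le_sq' ht2 ht1
  have hid : (a0 ^ 2 + a1 ^ 2) * (((a0 + 2 * b0) / 2) ^ 2 + ((a1 + 2 * b1) / 2) ^ 2)
      = ((a0 ^ 2 + a1 ^ 2) / 2 + (a0 * b0 + a1 * b1)) ^ 2
        + (a0 * b1 - a1 * b0) ^ 2 := by ring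
  have : ((a0 ^ 2 + a1 ^ 2) / 2) ^ 2 = (a0 ^ 2 + a1 ^ 2) ^ 2 / 4 := by ring
  linarith

/-- with the notation of the Euclidean longest-edge bisection
(`ρ(S) = (diam S)²/|S|`, `ψ(T)` the child containing the shortest edge `c`),
if `ρ(T) ≥ ρ(ψ(T))` and `ρ(ψ(T)) ≥ 4` then
`ρ(T) ≥ ρ(ψ(T)) + √(ρ(ψ(T))² − 16)`. -/
theorem stmt11 (a b c : EuclideanSpace ℝ (Fin 2)) (hsum : a + b + c = 0)
    (hab : ‖b‖ ≤ ‖a‖) (hbc : ‖c‖ ≤ ‖b‖)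
    (area : ℝ) (harea : area = |a 0 * b 1 - a 1 * b 0| / 2) (hpos : 0 < area)
    (ρT ρψ : ℝ) (hρT : ρT = ‖a‖ ^ 2 / area)
    (hρψ : ρψ =
      max (max ‖(1 / 2 : ℝ) • a‖ ‖c‖) ‖(1 / 2 : ℝ) • (b - c)‖ ^ 2 / (area / 2))
    (hmon : ρψ ≤ ρT) (h4 : 4 ≤ ρψ) :
    ρψ + Real.sqrt (ρψ ^ 2 - 16) ≤ ρT := by
  have h0 : a 0 + b 0 + c 0 = 0 := by
    have : (a + b + c) 0 = (0 : EuclideanSpace ℝ (Fin 2)) 0 := by rw [hsum]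
    simpa using this
  have h1 : a 1 + b 1 + c 1 = 0 := by
    have : (a + b + c) 1 = (0 : EuclideanSpace ℝ (Fin 2)) 1 := by rw [hsum]
    simpa using this
  set a0 := a 0; set a1 := a 1; set b0 := b 0; set b1 := b 1
  have hc0 : c 0 = -a0 - b0 := by linarith
  have hc1 : c 1 = -a1 - b1 := by linarith
  -- squared norms
  have hna : ‖a‖ ^ 2 = a0 ^ 2 + a1 ^ 2 := nsq2 a
  have hnb : ‖b‖ ^ 2 = b0 ^ 2 + b1 ^ 2 := nsq2 b
  have hnc : ‖c‖ ^ 2 = (-a0 - b0) ^ 2 + (-a1 - b1) ^ 2 := by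
    rw [nsq2 c, hc0, hc1]
  have hnha : ‖(1 / 2 : ℝ) • a‖ ^ 2 = (a0 ^ 2 + a1 ^ 2) / 4 := by
    rw [nsq2]
    simp only [PiLp.smul_apply, smul_eq_mul]
    ring
  have hnd : ‖(1 / 2 : ℝ) • (b - c)‖ ^ 2
      = ((a0 + 2 * b0) / 2) ^ 2 + ((a1 + 2 * b1) / 2) ^ 2 := by
    rw [nsq2]
    simp only [PiLp.smul_apply, PiLp.sub_apply, smul_eq_mul]
    rw [hc0, hc1]; ring
  -- squared hypotheses
  have hab2 : b0 ^ 2 + b1 ^ 2 ≤ a0 ^ 2 + a1 ^ 2 := by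
    have := pow_le_pow_left₀ (norm_nonneg b) hab 2
    rw [hna, hnb] at this; exact this
  have hbc2 : (-a0 - b0) ^ 2 + (-a1 - b1) ^ 2 ≤ b0 ^ 2 + b1 ^ 2 := by
    have := pow_le_pow_left₀ (norm_nonneg c) hbc 2
    rw [hnb, hnc] at this; exact this
  have hs2 : (a0 * b1 - a1 * b0) ^ 2 = 4 * area ^ 2 := by
    rw [harea, div_pow, sq_abs]; ring
  have hA2nn : (0:ℝ) ≤ a0 ^ 2 + a1 ^ 2 := by positivity
  -- positivity of A2
  have hidAB : (a0 ^ 2 + a1 ^ 2) * (b0 ^ 2 + b1 ^ 2)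
      = (a0 * b0 + a1 * b1) ^ 2 + (a0 * b1 - a1 * b0) ^ 2 := by ring
  have hApos : 0 < a0 ^ 2 + a1 ^ 2 := by
    rcases hA2nn.lt_or_eq with h | h
    · exact h
    · exfalso
      have hz : a0 ^ 2 + a1 ^ 2 = 0 := h.symm
      have h6 : (a0 * b0 + a1 * b1) ^ 2 + (a0 * b1 - a1 * b0) ^ 2 = 0 := by
        rw [← hidAB, hz]; ring
      have := mul_pos hpos hpos
      linarith [sq_nonneg (a0 * b0 + a1 * b1), hs2]
  -- the key geometric bound
  set m := max (max ‖(1 / 2 : ℝ) • a‖ ‖c‖) ‖(1 / 2 : ℝ) • (b - c)‖ with hm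
  have hkey : (a0 ^ 2 + a1 ^ 2) * m ^ 2
      ≤ (a0 ^ 2 + a1 ^ 2) ^ 2 / 4 + (a0 * b1 - a1 * b0) ^ 2 := by
    rcases max_choice (max ‖(1 / 2 : ℝ) • a‖ ‖c‖) ‖(1 / 2 : ℝ) • (b - c)‖ with h | h
    · rcases max_choice ‖(1 / 2 : ℝ) • a‖ ‖c‖ with h' | h'
      · rw [hm, h, h', hnha]
        have : (a0 ^ 2 + a1 ^ 2) * ((a0 ^ 2 + a1 ^ 2) / 4)
            = (a0 ^ 2 + a1 ^ 2) ^ 2 / 4 := by ring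
        linarith [sq_nonneg (a0 * b1 - a1 * b0)]
      · rw [hm, h, h', hnc]
        exact lemC a0 a1 b0 b1 hab2 hbc2
    · rw [hm, h, hnd]
      exact lemD a0 a1 b0 b1 hab2 hbc2
  have hm0 : 0 ≤ m := le_trans (norm_nonneg _) (le_max_of_le_left (le_max_left _ _))
  -- 2 ρψ ρT ≤ ρT² + 16
  have hρψ' : ρψ = 2 * m ^ 2 / area := by
    rw [hρψ]
    rw [div_div_eq_mul_div]
    ring
  have hρT' : ρT = (a0 ^ 2 + a1 ^ 2) / area := by rw [hρT, hna]
  have e1 : 2 * ρψ * ρT = (4 * ((a0 ^ 2 + a1 ^ 2) * m ^ 2)) / area ^ 2 := by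
    rw [hρψ', hρT']
    field_simp
    ring
  have e2 : ρT ^ 2 + 16 = ((a0 ^ 2 + a1 ^ 2) ^ 2 + 16 * area ^ 2) / area ^ 2 := by
    rw [hρT']
    field_simp
  have hq : 2 * ρψ * ρT ≤ ρT ^ 2 + 16 := by
    rw [e1, e2]
    have hc2 : (0:ℝ) < area ^ 2 := by positivity
    exact (div_le_div_iff_of_pos_right hc2).mpr (by linarith)
  -- conclude
  have hsq : ρψ ^ 2 - 16 ≤ (ρT - ρψ) ^ 2 := by
    have : (ρT - ρψ) ^ 2 = ρT ^ 2 - 2 * ρψ * ρT + ρψ ^ 2 := by ring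
    linarith
  have hfin : Real.sqrt (ρψ ^ 2 - 16) ≤ ρT - ρψ := by
    calc Real.sqrt (ρψ ^ 2 - 16) ≤ Real.sqrt ((ρT - ρψ) ^ 2) := Real.sqrt_le_sqrt hsq
      _ = ρT - ρψ := Real.sqrt_sq (by linarith)
  linarith
end
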